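/- Let k be a finite field, G = GL₂(k), B ≤ G the subgroup of upper triangular matrices, T ≤ G the subgroup of diagonal matrices, and E a field. Then the restriction to B of the induced representation Ind_B^G 1_E is isomorphic, as a representation of B, to the direct sum 1_E ⊕ Ind_T^B 1_E. -/

import Mathlib

namespace ADLV

variable {E : Type*} [Field E]

/-- The `E`-submodule of `H`-equivariant `E`-linear maps between two representations. -/
def equivariantMaps {H V₁ V₂ : Type*} [Group H]
    [AddCommGroup V₁] [Module E V₁] [AddCommGroup V₂] [Module E V₂]
    (ρ₁ : Representation E H V₁) (ρ₂ : Representation E H V₂) :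
    Submodule E (V₁ →ₗ[E] V₂) where
  carrier := {f | ∀ (h : H) (v : V₁), f (ρ₁ h v) = ρ₂ h (f v)}
  zero_mem' := by intro h v; simp
  add_mem' := by intro f g hf hg h v; simp [hf h v, hg h v]
  smul_mem' := by intro c f hf h v; simp [hf h v]

/-- The one-dimensional representation attached to a character. -/
def charRep {H : Type*} [Group H] (χ : H →* Eˣ) : Representation E H E where
  toFun h := ((χ h : E) • (1 : E →ₗ[E] E))
  map_one' := by simp
  map_mul' := by
    intro a b
    refine LinearMap.ext fun v => ?_
    simp [mul_smul]
    ring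

variable {H : Type*} [Group H] {V : Type*} [AddCommGroup V] [Module E V]

/-- The space of functions underlying the induced representation `Ind_P^H π`. -/
def indV (P : Subgroup H) (π : Representation E ↥P V) : Submodule E (H → V) where
  carrier := {f | ∀ (p : ↥P) (g : H), f (↑p * g) = π p (f g)}
  zero_mem' := by intro p g; simp
  add_mem' := by intro f g hf hg p x; simp [hf p x, hg p x]
  smul_mem' := by intro c f hf p x; simp [hf p x]

/-- The induced representation `Ind_P^H π`. -/
def ind (P : Subgroup H) (π : Representation E ↥P V) :
    Representation E H ↥(indV P π) where
  toFun h :=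
    { toFun := fun f => ⟨fun x => (f : H → V) (x * h), fun p g => by
        show (f : H → V) ((↑p * g) * h) = (π p) ((f : H → V) (g * h))
        rw [mul_assoc]; exact f.2 p (g * h)⟩
      map_add' := fun f g => rfl
      map_smul' := fun c f => rfl }
  map_one' := LinearMap.ext fun f => Subtype.ext <| funext fun x => by
    show (f : H → V) (x * 1) = (f : H → V) x
    rw [mul_one]
  map_mul' := fun a b => LinearMap.ext fun f => Subtype.ext <| funext fun x => by
    show (f : H → V) (x * (a * b)) = (f : H → V) (x * a * b)
    rw [mul_assoc]

/-- The space of functions underlying the compactly induced representation `ind_P^H π`: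
functions in `Ind_P^H π` supported on finitely many right cosets `Pg`. -/
def cIndV (P : Subgroup H) (π : Representation E ↥P V) : Submodule E (H → V) where
  carrier := {f | (∀ (p : ↥P) (g : H), f (↑p * g) = π p (f g)) ∧
      ∃ S : Finset H, ∀ x, f x ≠ 0 → ∃ s ∈ S, ∃ p ∈ P, x = p * s}
  zero_mem' := ⟨by intro p g; simp, ⟨∅, fun x hx => absurd rfl hx⟩⟩
  add_mem' := by
    classical
    rintro f g ⟨hf1, Sf, hf2⟩ ⟨hg1, Sg, hg2⟩
    refine ⟨by intro p x; simp [hf1 p x, hg1 p x], Sf ∪ Sg, fun x hx => ?_⟩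
    by_cases h : f x ≠ 0
    · obtain ⟨s, hs, hp⟩ := hf2 x h
      exact ⟨s, Finset.mem_union_left _ hs, hp⟩
    · push_neg at h
      have hgx : g x ≠ 0 := by
        intro h0
        apply hx
        simp [Pi.add_apply, h, h0]
      obtain ⟨s, hs, hp⟩ := hg2 x hgx
      exact ⟨s, Finset.mem_union_right _ hs, hp⟩
  smul_mem' := by
    rintro c f ⟨hf1, Sf, hf2⟩
    refine ⟨by intro p x; simp [hf1 p x], Sf, fun x hx => hf2 x ?_⟩
    intro h0
    apply hx
    simp [Pi.smul_apply, h0]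

/-- The compactly induced representation `ind_P^H π`. -/
def cind (P : Subgroup H) (π : Representation E ↥P V) :
    Representation E H ↥(cIndV P π) where
  toFun h :=
    { toFun := fun f => ⟨fun x => (f : H → V) (x * h),
        ⟨fun p g => by
          show (f : H → V) ((↑p * g) * h) = (π p) ((f : H → V) (g * h))
          rw [mul_assoc]; exact f.2.1 p (g * h), by
          classical
          obtain ⟨S, hS⟩ := f.2.2
          refine ⟨S.image (fun s => s * h⁻¹), fun x hx => ?_⟩
          obtain ⟨s, hs, p, hp, hxe⟩ := hS (x * h) hx
          refine ⟨s * h⁻¹, Finset.mem_image_of_mem _ hs, p, hp, ?_⟩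
          rw [← mul_assoc, ← hxe, mul_inv_cancel_right]⟩⟩
      map_add' := fun f g => rfl
      map_smul' := fun c f => rfl }
  map_one' := LinearMap.ext fun f => Subtype.ext <| funext fun x => by
    show (f : H → V) (x * 1) = (f : H → V) x
    rw [mul_one]
  map_mul' := fun a b => LinearMap.ext fun f => Subtype.ext <| funext fun x => by
    show (f : H → V) (x * (a * b)) = (f : H → V) (x * a * b)
    rw [mul_assoc]


section MatrixGroups

variable (R : Type*) [Field R]

/-- `GL₂(R)`, the unit group of the ring of 2×2 matrices over `R`. -/
abbrev GL2 := (Matrix (Fin 2) (Fin 2) R)ˣ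

/-- The Borel subgroup of upper triangular matrices in `GL₂(R)`. -/
def upperB : Subgroup (GL2 R) where
  carrier := {g | (g : Matrix (Fin 2) (Fin 2) R) 1 0 = 0}
  one_mem' := by
    show ((1 : GL2 R) : Matrix (Fin 2) (Fin 2) R) 1 0 = 0
    simp [Matrix.one_apply]
  mul_mem' := by
    intro a b ha hb
    simp only [Set.mem_setOf_eq] at ha hb ⊢
    rw [Units.val_mul, Matrix.mul_apply, Fin.sum_univ_two]
    simp [ha, hb]
  inv_mem' := by
    intro a ha
    simp only [Set.mem_setOf_eq] at ha ⊢
    rw [Matrix.coe_units_inv, Matrix.inv_def, Matrix.adjugate_fin_two]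
    simp [ha]

/-- The diagonal torus in `GL₂(R)`. -/
def diagT : Subgroup (GL2 R) where
  carrier := {g | (g : Matrix (Fin 2) (Fin 2) R) 0 1 = 0 ∧
    (g : Matrix (Fin 2) (Fin 2) R) 1 0 = 0}
  one_mem' := by
    constructor <;>
      · show ((1 : GL2 R) : Matrix (Fin 2) (Fin 2) R) _ _ = 0
        simp [Matrix.one_apply]
  mul_mem' := by
    intro a b ha hb
    simp only [Set.mem_setOf_eq] at ha hb ⊢
    constructor <;>
      · rw [Units.val_mul, Matrix.mul_apply, Fin.sum_univ_two]
        simp [ha.1, ha.2, hb.1, hb.2]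
  inv_mem' := by
    intro a ha
    simp only [Set.mem_setOf_eq] at ha ⊢
    rw [Matrix.coe_units_inv, Matrix.inv_def, Matrix.adjugate_fin_two]
    constructor <;> simp [ha.1, ha.2]

end MatrixGroups

/-- The direct sum of two representations. -/
def prodRep {E : Type*} [Field E] {H V₁ V₂ : Type*} [Group H]
    [AddCommGroup V₁] [Module E V₁] [AddCommGroup V₂] [Module E V₂]
    (ρ₁ : Representation E H V₁) (ρ₂ : Representation E H V₂) :
    Representation E H (V₁ × V₂) where
  toFun h := (ρ₁ h).prodMap (ρ₂ h)
  map_one' := LinearMap.ext fun x => by simp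
  map_mul' := fun a b => LinearMap.ext fun x => by simp

section MackeyAux

variable {k : Type*} [Field k] {E : Type*} [Field E]

/-- The Weyl element `w = [[0,1],[1,0]]`. -/
def wU : GL2 k := ⟨!![0,1;1,0], !![0,1;1,0], by
  ext i j; fin_cases i <;> fin_cases j <;>
    simp [Matrix.mul_apply, Fin.sum_univ_two, Matrix.one_apply], by
  ext i j; fin_cases i <;> fin_cases j <;>
    simp [Matrix.mul_apply, Fin.sum_univ_two, Matrix.one_apply]⟩

lemma wU_mul_wU : (wU : GL2 k) * wU = 1 := Units.ext (by
  show !![(0:k),1;1,0] * !![0,1;1,0] = 1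
  ext i j; fin_cases i <;> fin_cases j <;>
    simp [Matrix.mul_apply, Fin.sum_univ_two, Matrix.one_apply])

lemma wU_wU_cancel (x : GL2 k) : wU * (wU * x) = x := by
  rw [← mul_assoc, wU_mul_wU, one_mul]

/-- The "Borel part" `[[a,b],[0,1]]` of a matrix with nonzero `(1,0)` entry. -/
def lowU (a b : k) (ha : a ≠ 0) : GL2 k :=
  ⟨!![a, b; 0, 1], !![a⁻¹, -b * a⁻¹; 0, 1], by
    ext i j; fin_cases i <;> fin_cases j <;>
      simp [Matrix.mul_apply, Fin.sum_univ_two, Matrix.one_apply] <;> field_simp <;> ring, by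
    ext i j; fin_cases i <;> fin_cases j <;>
      simp [Matrix.mul_apply, Fin.sum_univ_two, Matrix.one_apply] <;> field_simp <;> ring⟩

/-- The diagonal matrix `diag(a,d)` as a unit. -/
def dU (a d : k) (ha : a ≠ 0) (hd : d ≠ 0) : GL2 k :=
  ⟨!![a, 0; 0, d], !![a⁻¹, 0; 0, d⁻¹], by
    ext i j; fin_cases i <;> fin_cases j <;>
      simp [Matrix.mul_apply, Fin.sum_univ_two, Matrix.one_apply] <;> field_simp, by
    ext i j; fin_cases i <;> fin_cases j <;>
      simp [Matrix.mul_apply, Fin.sum_univ_two, Matrix.one_apply] <;> field_simp⟩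

lemma lowU_mem (a b : k) (ha : a ≠ 0) : lowU a b ha ∈ upperB k := by
  show ((lowU a b ha : GL2 k) : Matrix (Fin 2) (Fin 2) k) 1 0 = 0
  simp [lowU]

lemma dU_mem_B (a d : k) (ha : a ≠ 0) (hd : d ≠ 0) : dU a d ha hd ∈ upperB k := by
  show ((dU a d ha hd : GL2 k) : Matrix (Fin 2) (Fin 2) k) 1 0 = 0
  simp [dU]

lemma dU_mem_T (a d : k) (ha : a ≠ 0) (hd : d ≠ 0) : dU a d ha hd ∈ diagT k :=
  ⟨by simp [dU], by simp [dU]⟩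

lemma b10_eq (p : ↥(upperB k)) : ((p : GL2 k) : Matrix (Fin 2) (Fin 2) k) 1 0 = 0 := p.2

lemma b_diag_ne (p : ↥(upperB k)) :
    ((p : GL2 k) : Matrix (Fin 2) (Fin 2) k) 0 0 ≠ 0 ∧
      ((p : GL2 k) : Matrix (Fin 2) (Fin 2) k) 1 1 ≠ 0 := by
  have hu : IsUnit ((p : GL2 k) : Matrix (Fin 2) (Fin 2) k) := (p : GL2 k).isUnit
  rw [Matrix.isUnit_iff_isUnit_det] at hu
  have hd := hu.ne_zero
  rw [Matrix.det_fin_two] at hd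
  have hd' : ((p : GL2 k) : Matrix (Fin 2) (Fin 2) k) 0 0 *
      ((p : GL2 k) : Matrix (Fin 2) (Fin 2) k) 1 1 ≠ 0 := by
    simpa [b10_eq p] using hd
  exact ⟨left_ne_zero_of_mul hd', right_ne_zero_of_mul hd'⟩

lemma indV_one_prop {H : Type*} [Group H] {P : Subgroup H}
    (f : ↥(indV P (1 : Representation E ↥P E))) (p : ↥P) (g : H) :
    (f : H → E) (↑p * g) = (f : H → E) g := by
  simpa using f.2 p g

lemma g_inv
    (g : ↥(indV ((diagT k).subgroupOf (upperB k))
      (1 : Representation E ↥((diagT k).subgroupOf (upperB k)) E)))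
    (t b : ↥(upperB k)) (ht : (t : GL2 k) ∈ diagT k) :
    (g : ↥(upperB k) → E) (t * b) = (g : ↥(upperB k) → E) b :=
  indV_one_prop g ⟨t, by rwa [Subgroup.mem_subgroupOf]⟩ b

/-- The forward map of the Mackey decomposition. -/
def fwd (f : ↥(indV (upperB k) (1 : Representation E ↥(upperB k) E))) :
    E × ↥(indV ((diagT k).subgroupOf (upperB k))
      (1 : Representation E ↥((diagT k).subgroupOf (upperB k)) E)) :=
  ((f : GL2 k → E) 1, ⟨fun b => (f : GL2 k → E) (wU * (↑b : GL2 k)), by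
    intro p b
    simp only [MonoidHom.one_apply, Module.End.one_apply]
    have hpd := Subgroup.mem_subgroupOf.mp p.2
    have h01 : (((p : ↥(upperB k)) : GL2 k) : Matrix (Fin 2) (Fin 2) k) 0 1 = 0 := hpd.1
    have hq : (wU * ((p : ↥(upperB k)) : GL2 k) * wU) ∈ upperB k := by
      show ((wU * ((p : ↥(upperB k)) : GL2 k) * wU : GL2 k) : Matrix (Fin 2) (Fin 2) k) 1 0 = 0
      simp [Units.val_mul, Matrix.mul_apply, Matrix.vecMul, dotProduct, Matrix.vecHead, Fin.sum_univ_two, wU, h01]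
    have h := indV_one_prop f ⟨_, hq⟩ (wU * (↑b : GL2 k))
    have hrw : (wU * ((p : ↥(upperB k)) : GL2 k) * wU) * (wU * (↑b : GL2 k))
        = wU * (↑(↑p * b) : GL2 k) := by
      rw [Subgroup.coe_mul]
      simp only [mul_assoc, wU_wU_cancel]
    rw [hrw] at h
    exact h⟩)

open Classical in
/-- The backward map of the Mackey decomposition. -/
noncomputable def bwd (c : E)
    (g : ↥(indV ((diagT k).subgroupOf (upperB k))
      (1 : Representation E ↥((diagT k).subgroupOf (upperB k)) E))) :
    GL2 k → E := fun x =>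
  if h : (x : Matrix (Fin 2) (Fin 2) k) 1 0 = 0 then c
  else (g : ↥(upperB k) → E)
    ⟨lowU ((x : Matrix (Fin 2) (Fin 2) k) 1 0) ((x : Matrix (Fin 2) (Fin 2) k) 1 1) h,
      lowU_mem _ _ _⟩

lemma bwd_mem (c : E)
    (g : ↥(indV ((diagT k).subgroupOf (upperB k))
      (1 : Representation E ↥((diagT k).subgroupOf (upperB k)) E))) :
    bwd c g ∈ indV (upperB k) (1 : Representation E ↥(upperB k) E) := by
  intro p x
  simp only [MonoidHom.one_apply, Module.End.one_apply]
  have hp10 : ((p : GL2 k) : Matrix (Fin 2) (Fin 2) k) 1 0 = 0 := p.2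
  have hp11 : ((p : GL2 k) : Matrix (Fin 2) (Fin 2) k) 1 1 ≠ 0 := (b_diag_ne p).2
  have h10 : ((↑p * x : GL2 k) : Matrix (Fin 2) (Fin 2) k) 1 0
      = ((p : GL2 k) : Matrix (Fin 2) (Fin 2) k) 1 1 * (x : Matrix (Fin 2) (Fin 2) k) 1 0 := by
    rw [Units.val_mul, Matrix.mul_apply, Fin.sum_univ_two, hp10]; ring
  have h11 : ((↑p * x : GL2 k) : Matrix (Fin 2) (Fin 2) k) 1 1
      = ((p : GL2 k) : Matrix (Fin 2) (Fin 2) k) 1 1 * (x : Matrix (Fin 2) (Fin 2) k) 1 1 := by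
    rw [Units.val_mul, Matrix.mul_apply, Fin.sum_univ_two, hp10]; ring
  by_cases h : (x : Matrix (Fin 2) (Fin 2) k) 1 0 = 0
  · unfold bwd
    rw [dif_pos (by rw [h10, h, mul_zero]), dif_pos h]
  · have h' : ((↑p * x : GL2 k) : Matrix (Fin 2) (Fin 2) k) 1 0 ≠ 0 := by
      rw [h10]; exact mul_ne_zero hp11 h
    unfold bwd
    rw [dif_neg h', dif_neg h]
    have key : (⟨lowU (((↑p * x : GL2 k) : Matrix (Fin 2) (Fin 2) k) 1 0)
          (((↑p * x : GL2 k) : Matrix (Fin 2) (Fin 2) k) 1 1) h', lowU_mem _ _ _⟩ : ↥(upperB k))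
        = ⟨dU (((p : GL2 k) : Matrix (Fin 2) (Fin 2) k) 1 1) 1 hp11 one_ne_zero,
            dU_mem_B _ _ hp11 one_ne_zero⟩ *
          ⟨lowU ((x : Matrix (Fin 2) (Fin 2) k) 1 0) ((x : Matrix (Fin 2) (Fin 2) k) 1 1) h,
            lowU_mem _ _ _⟩ := by
      apply Subtype.ext
      apply Units.ext
      show (lowU (((↑p * x : GL2 k) : Matrix (Fin 2) (Fin 2) k) 1 0)
          (((↑p * x : GL2 k) : Matrix (Fin 2) (Fin 2) k) 1 1) h' : GL2 k).val
        = ((dU (((p : GL2 k) : Matrix (Fin 2) (Fin 2) k) 1 1) 1 hp11 one_ne_zero : GL2 k) *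
            lowU ((x : Matrix (Fin 2) (Fin 2) k) 1 0) ((x : Matrix (Fin 2) (Fin 2) k) 1 1) h).val
      ext i j
      fin_cases i <;> fin_cases j <;>
        simp [lowU, dU, Units.val_mul, Matrix.mul_apply, Fin.sum_univ_two, h10, h11]
    rw [key, g_inv g _ _ (dU_mem_T _ _ hp11 one_ne_zero)]

/-- The Mackey decomposition as a linear equivalence. -/
noncomputable def theEquiv :
    ↥(indV (upperB k) (1 : Representation E ↥(upperB k) E)) ≃ₗ[E]
      (E × ↥(indV ((diagT k).subgroupOf (upperB k))
        (1 : Representation E ↥((diagT k).subgroupOf (upperB k)) E))) where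
  toFun := fwd
  map_add' f g := Prod.ext rfl (Subtype.ext (funext fun b => rfl))
  map_smul' c f := Prod.ext rfl (Subtype.ext (funext fun b => rfl))
  invFun p := ⟨bwd p.1 p.2, bwd_mem p.1 p.2⟩
  left_inv f := by
    apply Subtype.ext
    funext x
    show bwd ((f : GL2 k → E) 1) (fwd f).2 x = (f : GL2 k → E) x
    unfold bwd
    by_cases h : (x : Matrix (Fin 2) (Fin 2) k) 1 0 = 0
    · rw [dif_pos h]
      have := indV_one_prop f ⟨x, h⟩ 1
      simpa using this.symm
    · rw [dif_neg h]
      show (f : GL2 k → E)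
          (wU * lowU ((x : Matrix (Fin 2) (Fin 2) k) 1 0)
            ((x : Matrix (Fin 2) (Fin 2) k) 1 1) h) = (f : GL2 k → E) x
      set L := lowU ((x : Matrix (Fin 2) (Fin 2) k) 1 0)
        ((x : Matrix (Fin 2) (Fin 2) k) 1 1) h with hL
      have hu : (x * L⁻¹ * wU⁻¹) ∈ upperB k := by
        show ((x * L⁻¹ * wU⁻¹ : GL2 k) : Matrix (Fin 2) (Fin 2) k) 1 0 = 0
        simp [Units.val_mul, Matrix.mul_apply, Fin.sum_univ_two, hL, lowU, wU]
        field_simp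
        ring
      have hf := indV_one_prop f ⟨_, hu⟩ (wU * L)
      have hx : (x * L⁻¹ * wU⁻¹) * (wU * L) = x := by group
      rw [hx] at hf
      exact hf.symm
  right_inv p := by
    obtain ⟨c, g⟩ := p
    refine Prod.ext ?_ ?_
    · show bwd c g 1 = c
      unfold bwd
      rw [dif_pos]
      show ((1 : GL2 k) : Matrix (Fin 2) (Fin 2) k) 1 0 = 0
      simp [Matrix.one_apply]
    · apply Subtype.ext
      funext b
      show bwd c g (wU * (↑b : GL2 k)) = (g : ↥(upperB k) → E) b
      have hb00 : ((b : GL2 k) : Matrix (Fin 2) (Fin 2) k) 0 0 ≠ 0 := (b_diag_ne b).1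
      have hb11 : ((b : GL2 k) : Matrix (Fin 2) (Fin 2) k) 1 1 ≠ 0 := (b_diag_ne b).2
      have h10 : ((wU * (b : GL2 k) : GL2 k) : Matrix (Fin 2) (Fin 2) k) 1 0
          = ((b : GL2 k) : Matrix (Fin 2) (Fin 2) k) 0 0 := by
        simp [Units.val_mul, Matrix.mul_apply, Fin.sum_univ_two, wU]
      have h11 : ((wU * (b : GL2 k) : GL2 k) : Matrix (Fin 2) (Fin 2) k) 1 1
          = ((b : GL2 k) : Matrix (Fin 2) (Fin 2) k) 0 1 := by
        simp [Units.val_mul, Matrix.mul_apply, Fin.sum_univ_two, wU]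
      have h' : ((wU * (b : GL2 k) : GL2 k) : Matrix (Fin 2) (Fin 2) k) 1 0 ≠ 0 := by
        rw [h10]; exact hb00
      unfold bwd
      rw [dif_neg h']
      have key : (⟨lowU (((wU * (b : GL2 k) : GL2 k) : Matrix (Fin 2) (Fin 2) k) 1 0)
            (((wU * (b : GL2 k) : GL2 k) : Matrix (Fin 2) (Fin 2) k) 1 1) h', lowU_mem _ _ _⟩ : ↥(upperB k))
          = ⟨dU 1 (((b : GL2 k) : Matrix (Fin 2) (Fin 2) k) 1 1)⁻¹ one_ne_zero
              (inv_ne_zero hb11), dU_mem_B _ _ one_ne_zero (inv_ne_zero hb11)⟩ * b := by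
        apply Subtype.ext
        apply Units.ext
        show (lowU (((wU * (b : GL2 k) : GL2 k) : Matrix (Fin 2) (Fin 2) k) 1 0)
            (((wU * (b : GL2 k) : GL2 k) : Matrix (Fin 2) (Fin 2) k) 1 1) h' : GL2 k).val
          = ((dU 1 (((b : GL2 k) : Matrix (Fin 2) (Fin 2) k) 1 1)⁻¹ one_ne_zero
              (inv_ne_zero hb11) : GL2 k) * (b : GL2 k)).val
        ext i j
        fin_cases i <;> fin_cases j <;>
          simp [lowU, dU, h10, h11, Units.val_mul, Matrix.mul_apply, Fin.sum_univ_two,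
            b10_eq b, inv_mul_cancel₀ hb11]
      rw [key, g_inv g _ _ (dU_mem_T _ _ one_ne_zero (inv_ne_zero hb11))]

lemma theEquiv_equivariant (b : ↥(upperB k))
    (f : ↥(indV (upperB k) (1 : Representation E ↥(upperB k) E))) :
    theEquiv ((ind (upperB k) (1 : Representation E ↥(upperB k) E)) (↑b) f) =
      (prodRep (1 : Representation E ↥(upperB k) E)
        (ind ((diagT k).subgroupOf (upperB k))
          (1 : Representation E ↥((diagT k).subgroupOf (upperB k)) E))) b (theEquiv f) := by
  have h1 : theEquiv ((ind (upperB k) (1 : Representation E ↥(upperB k) E)) (↑b) f)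
      = fwd ((ind (upperB k) (1 : Representation E ↥(upperB k) E)) (↑b) f) := rfl
  have h2 : theEquiv f = fwd f := rfl
  rw [h1, h2]
  refine Prod.ext ?_ ?_
  · show (f : GL2 k → E) (1 * ↑b)
      = ((1 : Representation E ↥(upperB k) E) b) ((f : GL2 k → E) 1)
    simp only [MonoidHom.one_apply, Module.End.one_apply, one_mul]
    simpa using indV_one_prop f b 1
  · apply Subtype.ext
    funext x
    show (f : GL2 k → E) ((wU * (↑x : GL2 k)) * (↑b : GL2 k)) = (f : GL2 k → E) (wU * (↑(x * b) : GL2 k))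
    rw [Subgroup.coe_mul, mul_assoc]

end MackeyAux

/-- Mackey-type lemma for `GL₂` of a finite field `k`: the restriction to the Borel
subgroup `B` of `Ind_B^G 1` is isomorphic to `1 ⊕ Ind_T^B 1`, where `T ≤ B` is the
diagonal torus. -/
theorem ind_B_one_restrict_iso (k : Type*) [Field k] [Fintype k]
    (E : Type*) [Field E] :
    ∃ e : ↥(indV (upperB k) (1 : Representation E ↥(upperB k) E)) ≃ₗ[E]
        (E × ↥(indV ((diagT k).subgroupOf (upperB k))
          (1 : Representation E ↥((diagT k).subgroupOf (upperB k)) E))),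
      ∀ (b : ↥(upperB k)) (f : ↥(indV (upperB k) (1 : Representation E ↥(upperB k) E))),
        e ((ind (upperB k) (1 : Representation E ↥(upperB k) E)) (↑b) f) =
          (prodRep (1 : Representation E ↥(upperB k) E)
            (ind ((diagT k).subgroupOf (upperB k))
              (1 : Representation E ↥((diagT k).subgroupOf (upperB k)) E))) b (e f) :=
  ⟨theEquiv, theEquiv_equivariant⟩

end ADLV
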